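/- Let E be a reflexive Banach space, S a nonempty set, c : S → E bounded, X ⊆ ℓ^∞(S) a subspace containing constants, all coordinate functions s ↦ ⟨c(s), x*⟩, and all functions s ↦ D_g(c(s), x) for x ∈ E, where g : E → ℝ is a strictly convex Gâteaux differentiable function that is bounded on bounded sets. Let μ be a mean on X and z_μ its barycenter. Then for every x ∈ E, μ_s D_g(c(s), x) − μ_s D_g(c(s), z_μ) = D_g(z_μ, x). In particular z_μ is the unique minimizer over x ∈ E of x ↦ μ_s D_g(c(s), x). -/

import Mathlib

open Set

/-- Convexity of `t ↦ g (x + t • v)` for convex `g`. -/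
private lemma line_convexOn {E : Type*} [NormedAddCommGroup E] [NormedSpace ℝ E]
    {g : E → ℝ} (hconv : ConvexOn ℝ Set.univ g) (x v : E) :
    ConvexOn ℝ Set.univ (fun t : ℝ => g (x + t • v)) := by
  refine ⟨convex_univ, fun a _ b _ p q hp hq hpq => ?_⟩
  have hq' : q = 1 - p := by linarith
  subst hq'
  have key : x + (p * a + (1 - p) * b) • v = p • (x + a • v) + (1 - p) • (x + b • v) := by
    module
  simpa [key] using hconv.2 (mem_univ (x + a • v)) (mem_univ (x + b • v)) hp hq hpq

private lemma line_strictConvexOn {E : Type*} [NormedAddCommGroup E] [NormedSpace ℝ E]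
    {g : E → ℝ} (hconv : StrictConvexOn ℝ Set.univ g) (x : E) {v : E} (hv : v ≠ 0) :
    StrictConvexOn ℝ Set.univ (fun t : ℝ => g (x + t • v)) := by
  refine ⟨convex_univ, fun a _ b _ hab p q hp hq hpq => ?_⟩
  have hq' : q = 1 - p := by linarith
  subst hq'
  have key : x + (p * a + (1 - p) * b) • v = p • (x + a • v) + (1 - p) • (x + b • v) := by
    module
  have hne : x + a • v ≠ x + b • v := by
    intro h
    apply hab
    have := add_left_cancel h
    have h2 : (a - b) • v = 0 := by rw [sub_smul, this, sub_self]
    rcases smul_eq_zero.mp h2 with h3 | h3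
    · linarith [sub_eq_zero.mp (by exact_mod_cast h3)]
    · exact absurd h3 hv
  simpa [key] using hconv.2 (mem_univ (x + a • v)) (mem_univ (x + b • v)) hne hp hq hpq

/-- Tangent line inequality: `grad x (z - x) ≤ g z - g x`. -/
private lemma tangent_le {E : Type*} [NormedAddCommGroup E] [NormedSpace ℝ E]
    {g : E → ℝ} (hconv : StrictConvexOn ℝ Set.univ g)
    {grad : E → (E →L[ℝ] ℝ)}
    (hdiff : ∀ y : E, ∀ v : E, HasDerivAt (fun t : ℝ => g (y + t • v)) (grad y v) 0)
    (x z : E) : grad x (z - x) ≤ g z - g x := by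
  have hf := line_convexOn hconv.convexOn x (z - x)
  have hslope := hf.le_slope_of_hasDerivAt (mem_univ (0:ℝ)) (mem_univ (1:ℝ)) one_pos
    (hdiff x (z - x))
  rw [slope_def_field] at hslope
  simpa using hslope

/-- Strict tangent line inequality when `z ≠ x`. -/
private lemma tangent_lt {E : Type*} [NormedAddCommGroup E] [NormedSpace ℝ E]
    {g : E → ℝ} (hconv : StrictConvexOn ℝ Set.univ g)
    {grad : E → (E →L[ℝ] ℝ)}
    (hdiff : ∀ y : E, ∀ v : E, HasDerivAt (fun t : ℝ => g (y + t • v)) (grad y v) 0)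
    {x z : E} (hne : z ≠ x) : grad x (z - x) < g z - g x := by
  have hv : z - x ≠ 0 := sub_ne_zero.mpr hne
  have hf := line_strictConvexOn hconv x hv
  have hslope := hf.lt_slope_of_hasDerivAt (mem_univ (0:ℝ)) (mem_univ (1:ℝ)) one_pos
    (hdiff x (z - x))
  rw [slope_def_field] at hslope
  simpa using hslope

/-- For the barycenter `z` of a bounded orbit `c : S → E` w.r.t. a mean `μ`,
`μ_s D_g(c(s), x) - μ_s D_g(c(s), z) = D_g(z, x)` for every `x ∈ E`; in particular
`z` is the unique minimizer of `x ↦ μ_s D_g(c(s), x)`. -/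
theorem barycenter_unique_minimizer
    {E : Type*} [NormedAddCommGroup E] [NormedSpace ℝ E] [CompleteSpace E]
    (hrefl : Function.Surjective (NormedSpace.inclusionInDoubleDual ℝ E))
    {S : Type*} [Nonempty S]
    (g : E → ℝ) (hconv : StrictConvexOn ℝ Set.univ g)
    (grad : E → (E →L[ℝ] ℝ))
    (hdiff : ∀ y : E, ∀ v : E, HasDerivAt (fun t : ℝ => g (y + t • v)) (grad y v) 0)
    (hgbdd : ∀ r : ℝ, ∃ M : ℝ, ∀ x : E, ‖x‖ ≤ r → |g x| ≤ M)
    (D : E → E → ℝ)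
    (hD : ∀ x y, D x y = g x - g y - grad y (x - y))
    (c : S → E) (Mc : ℝ) (hcbdd : ∀ s : S, ‖c s‖ ≤ Mc)
    (X : Submodule ℝ (S → ℝ))
    (hconst : ∀ r : ℝ, (fun _ : S => r) ∈ X)
    (hcoord : ∀ φ : StrongDual ℝ E, (fun s => φ (c s)) ∈ X)
    (hDmem : ∀ x : E, (fun s => D (c s) x) ∈ X)
    (μ : X →ₗ[ℝ] ℝ)
    (hμ1 : μ ⟨fun _ => (1 : ℝ), hconst 1⟩ = 1)
    (hpos : ∀ f : X, (∀ t : S, 0 ≤ (f : S → ℝ) t) → 0 ≤ μ f)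
    (z : E)
    (hz : ∀ φ : StrongDual ℝ E, μ ⟨fun s => φ (c s), hcoord φ⟩ = φ z) :
    (∀ x : E,
        μ ⟨fun s => D (c s) x, hDmem x⟩ - μ ⟨fun s => D (c s) z, hDmem z⟩ = D z x) ∧
    (∀ x : E, μ ⟨fun s => D (c s) z, hDmem z⟩ ≤ μ ⟨fun s => D (c s) x, hDmem x⟩) ∧
    (∀ x : E,
        μ ⟨fun s => D (c s) x, hDmem x⟩ = μ ⟨fun s => D (c s) z, hDmem z⟩ → x = z) := by
  have main : ∀ x : E,
      μ ⟨fun s => D (c s) x, hDmem x⟩ - μ ⟨fun s => D (c s) z, hDmem z⟩ = D z x := by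
    intro x
    set φ : StrongDual ℝ E := grad z - grad x with hφ
    have key : (⟨fun s => D (c s) x, hDmem x⟩ : X)
        = ⟨fun s => D (c s) z, hDmem z⟩
          + (D z x - φ z) • (⟨fun _ => (1 : ℝ), hconst 1⟩ : X)
          + ⟨fun s => φ (c s), hcoord φ⟩ := by
      apply Subtype.ext
      funext s
      have : (((⟨fun s => D (c s) z, hDmem z⟩
          + (D z x - φ z) • (⟨fun _ => (1 : ℝ), hconst 1⟩ : X)
          + ⟨fun s => φ (c s), hcoord φ⟩ : X) : S → ℝ)) s
          = D (c s) z + (D z x - φ z) * 1 + φ (c s) := rfl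
      rw [this, hφ]
      simp only [hD, map_sub, ContinuousLinearMap.sub_apply]
      ring
    rw [key, map_add, map_add, map_smul, hμ1, hz φ, smul_eq_mul, mul_one]
    ring
  have hnonneg : ∀ x : E, 0 ≤ D z x := by
    intro x
    rw [hD]
    linarith [tangent_le hconv hdiff x z]
  refine ⟨main, fun x => ?_, fun x hx => ?_⟩
  · linarith [main x, hnonneg x]
  · by_contra hne
    have h1 : D z x = 0 := by
      have := main x
      rw [hx] at this
      linarith
    have h2 : 0 < D z x := by
      rw [hD]
      have := tangent_lt hconv hdiff (Ne.symm hne : z ≠ x)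
      linarith
    linarith
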